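/- Let Ω ⊂ ℝⁿ be a nonempty open bounded set and let x ∈ Ω be a point of the medial axis, i.e., Γ(x) contains at least two distinct points. If every closed ball in ℝⁿ containing Γ(x) has radius at least R(x)/√2, then the separation angle at x is at least π/4; that is, there exist y, z ∈ Γ(x) such that the angle between the vectors y − x and z − x is at least π/4. -/

import Mathlib

open Metric Set EuclideanGeometry
open scoped RealInnerProductSpace

theorem separation_angle_ge_pi_div_four
    (n : ℕ) (Ω : Set (EuclideanSpace ℝ (Fin n)))
    (hΩo : IsOpen Ω) (hΩb : Bornology.IsBounded Ω) (hΩne : Ω.Nonempty)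
    (x : EuclideanSpace ℝ (Fin n)) (hx : x ∈ Ω)
    (Γ : Set (EuclideanSpace ℝ (Fin n)))
    (hΓ : Γ = {y ∈ frontier Ω | dist x y = infDist x (frontier Ω)})
    (hmedial : ∃ y ∈ Γ, ∃ z ∈ Γ, y ≠ z)
    (henclose : ∀ (c : EuclideanSpace ℝ (Fin n)) (R' : ℝ),
      Γ ⊆ closedBall c R' → infDist x (frontier Ω) / Real.sqrt 2 ≤ R') :
    ∃ y ∈ Γ, ∃ z ∈ Γ, Real.pi / 4 ≤ ∠ y x z := by
  by_contra hcon
  push_neg at hcon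
  set R := infDist x (frontier Ω) with hRdef
  obtain ⟨y₀, hy₀, -⟩ := hmedial
  have hy₀m := hΓ ▸ hy₀
  have hy₀f : y₀ ∈ frontier Ω := hy₀m.1
  have hy₀d : dist x y₀ = R := hy₀m.2
  have hxf : x ∉ frontier Ω := fun h => h.2 (by rwa [hΩo.interior_eq])
  have hRpos : 0 < R := by
    rw [← hy₀d, dist_pos]
    rintro rfl
    exact hxf hy₀f
  have hs2 : (0:ℝ) < Real.sqrt 2 := Real.sqrt_pos.mpr (by norm_num)
  have hs2sq : Real.sqrt 2 ^ 2 = 2 := Real.sq_sqrt (by norm_num)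
  set t : ℝ := (Real.sqrt 2)⁻¹ with htdef
  have htpos : 0 < t := inv_pos.mpr hs2
  set c : EuclideanSpace ℝ (Fin n) := x + t • (y₀ - x) with hcdef
  have hu : ‖y₀ - x‖ = R := by rw [← hy₀d, dist_eq_norm, norm_sub_rev]
  have key : ∀ z ∈ Γ, dist z c < R / Real.sqrt 2 := by
    intro z hz
    have hzm := hΓ ▸ hz
    have hv : ‖z - x‖ = R := by rw [← hzm.2, dist_eq_norm, norm_sub_rev]
    have hang : ∠ y₀ x z < Real.pi / 4 := hcon y₀ hy₀ z hz
    have hcos : Real.cos (Real.pi / 4) < Real.cos (∠ y₀ x z) :=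
      Real.cos_lt_cos_of_nonneg_of_le_pi (EuclideanGeometry.angle_nonneg _ _ _)
        (by linarith [Real.pi_pos]) hang
    rw [Real.cos_pi_div_four] at hcos
    have hangeq : ∠ y₀ x z = InnerProductGeometry.angle (y₀ - x) (z - x) := rfl
    have hcoseq : Real.cos (∠ y₀ x z) = (inner ℝ (y₀ - x) (z - x) : ℝ) / (R * R) := by
      rw [hangeq, InnerProductGeometry.cos_angle, hu, hv]
    have hinner : Real.sqrt 2 / 2 * (R * R) < (inner ℝ (y₀ - x) (z - x) : ℝ) := by
      have hRR : (0:ℝ) < R * R := mul_pos hRpos hRpos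
      rw [hcoseq] at hcos
      calc Real.sqrt 2 / 2 * (R * R) < (inner ℝ (y₀ - x) (z - x) : ℝ) / (R * R) * (R * R) := by
            exact (mul_lt_mul_iff_left₀ hRR).mpr hcos
        _ = (inner ℝ (y₀ - x) (z - x) : ℝ) := by field_simp
    have hzc : z - c = (z - x) - t • (y₀ - x) := by
      rw [hcdef]; abel
    have hnorm : ‖z - c‖ ^ 2 < R ^ 2 / 2 := by
      rw [hzc, norm_sub_sq_real, real_inner_smul_right, norm_smul, Real.norm_eq_abs,
        abs_of_pos htpos, hv, hu]
      have ht2 : t ^ 2 = 1 / 2 := by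
        rw [htdef, inv_pow, hs2sq]; norm_num
      have h2 : (Real.sqrt 2)⁻¹ * Real.sqrt 2 = 1 := inv_mul_cancel₀ hs2.ne'
      have hti : t * (Real.sqrt 2 / 2 * (R * R)) = R ^ 2 / 2 := by
        calc t * (Real.sqrt 2 / 2 * (R * R))
            = ((Real.sqrt 2)⁻¹ * Real.sqrt 2) * (R * R) / 2 := by rw [htdef]; ring
          _ = R ^ 2 / 2 := by rw [h2]; ring
      have hinner2 : (inner ℝ (z - x) (y₀ - x) : ℝ) = (inner ℝ (y₀ - x) (z - x) : ℝ) := real_inner_comm _ _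
      rw [hinner2]
      have : R ^ 2 / 2 < t * (inner ℝ (y₀ - x) (z - x) : ℝ) := by
        rw [← hti]
        exact (mul_lt_mul_iff_right₀ htpos).mpr hinner
      nlinarith [ht2]
    have hsq : (R / Real.sqrt 2) ^ 2 = R ^ 2 / 2 := by
      rw [div_pow, hs2sq]
    have hnn : 0 ≤ R / Real.sqrt 2 := div_nonneg hRpos.le hs2.le
    rw [dist_eq_norm]
    exact lt_of_pow_lt_pow_left₀ 2 hnn (by rw [hsq]; exact hnorm)
  -- compactness
  have hΓclosed : IsClosed Γ := by
    rw [hΓ]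
    exact isClosed_frontier.inter (isClosed_eq (continuous_const.dist continuous_id) continuous_const)
  have hΓbdd : Bornology.IsBounded Γ := by
    refine (hΩb.closure.subset ?_)
    rw [hΓ]
    exact fun y hy => frontier_subset_closure hy.1
  have hΓcomp : IsCompact Γ := Metric.isCompact_of_isClosed_isBounded hΓclosed hΓbdd
  obtain ⟨z₀, hz₀, hmax⟩ := hΓcomp.exists_isMaxOn ⟨y₀, hy₀⟩
    ((continuous_id.dist continuous_const).continuousOn :
      ContinuousOn (fun z => dist z c) Γ)
  have hsub : Γ ⊆ closedBall c (dist z₀ c) := fun z hz => mem_closedBall.mpr (hmax hz)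
  have := henclose c (dist z₀ c) hsub
  have := key z₀ hz₀
  linarith
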